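/- Let m ≥ 0 be an integer and let δ ∈ {0,1} satisfy m ≡ δ (mod 2). Then there exist two-variable polynomials P₊ and P₋ with complex coefficients such that for all complex a, b with Re(a) > 0 and Re(b) > 0: 𝓑_{+1,m}(a,b) = P₊(a,b) · Γ(a/2) · Γ((δ+b)/2) / Γ((m+a+b)/2) and 𝓑_{-1,m}(a,b) = P₋(a,b) · Γ((1+a)/2) · Γ((1-δ+b)/2) / Γ((m+a+b)/2). -/

import Mathlib

open MeasureTheory

/-- The generalized beta function `𝓑_{ε,m}(a,b)` for `ε = ±1`. -/
noncomputable def genBeta (ε : ℂ) (m : ℕ) (a b : ℂ) : ℂ :=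
  ∫ x in Set.Ioi (0 : ℝ),
    (x : ℂ) ^ (a - 1) * (1 + (x : ℂ) ^ 2) ^ (-(a + b) / 2) *
      (((1 + Complex.I * (x : ℂ)) / (Real.sqrt (1 + x ^ 2) : ℂ)) ^ (-(m : ℂ)) +
        ε * ((1 - Complex.I * (x : ℂ)) / (Real.sqrt (1 + x ^ 2) : ℂ)) ^ (-(m : ℂ)))

open Set Complex

noncomputable def hfun (s t : ℂ) (x : ℝ) : ℂ :=
  (x : ℂ) ^ (s - 1) * (1 + (x : ℂ) ^ 2) ^ (-(s + t) / 2)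

lemma cpow_real (r : ℝ) (hr : 0 < r) (w : ℂ) :
    (r : ℂ) ^ w = Complex.exp ((Real.log r : ℂ) * w) := by
  rw [Complex.cpow_def_of_ne_zero (by exact_mod_cast hr.ne'), Complex.ofReal_log hr.le]

lemma phi_hasDeriv (x : ℝ) :
    HasDerivAt (fun y : ℝ => y ^ 2 / (1 + y ^ 2)) (2 * x / (1 + x ^ 2) ^ 2) x := by
  have h1 : HasDerivAt (fun y : ℝ => y ^ 2) (2 * x) x := by
    simpa using hasDerivAt_pow 2 x
  have h2 : HasDerivAt (fun y : ℝ => 1 + y ^ 2) (2 * x) x := (h1.const_add 1)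
  have hne : (1 + x ^ 2) ≠ 0 := by positivity
  have := h1.div h2 hne
  rw [show (2 * x / (1 + x ^ 2) ^ 2) = (2 * x * (1 + x ^ 2) - x ^ 2 * (2 * x)) / (1 + x ^ 2) ^ 2 by ring]
  exact this

lemma phi_injOn : InjOn (fun y : ℝ => y ^ 2 / (1 + y ^ 2)) (Ioi 0) := by
  intro x hx y hy h
  simp only at h
  have hx' : (0:ℝ) < x := hx
  have hy' : (0:ℝ) < y := hy
  have h1 : (1 + x ^ 2) ≠ 0 := by positivity
  have h2 : (1 + y ^ 2) ≠ 0 := by positivity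
  have : x ^ 2 = y ^ 2 := by
    field_simp at h
    nlinarith [h]
  nlinarith [this, sq_nonneg (x - y), sq_nonneg (x + y)]

lemma phi_image : (fun y : ℝ => y ^ 2 / (1 + y ^ 2)) '' (Ioi 0) = Ioo 0 1 := by
  ext t
  constructor
  · rintro ⟨x, hx, rfl⟩
    have hx' : (0:ℝ) < x := hx
    constructor
    · positivity
    · rw [div_lt_one (by positivity)]; nlinarith
  · rintro ⟨ht0, ht1⟩
    refine ⟨Real.sqrt (t / (1 - t)), ?_, ?_⟩
    · exact Real.sqrt_pos.mpr (div_pos ht0 (by linarith))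
    · have h1t : (0:ℝ) < 1 - t := by linarith
      simp only
      rw [Real.sq_sqrt (le_of_lt (div_pos ht0 h1t))]
      field_simp
      ring

lemma heq_point (s t : ℂ) {x : ℝ} (hx : 0 < x) :
    |2 * x / (1 + x ^ 2) ^ 2| •
      ((((x ^ 2 / (1 + x ^ 2) : ℝ)) : ℂ) ^ (s / 2 - 1) *
        (1 - (((x ^ 2 / (1 + x ^ 2) : ℝ)) : ℂ)) ^ (t / 2 - 1)) = 2 * hfun s t x := by
  have hr : (0:ℝ) < 1 + x ^ 2 := by positivity
  have h1 : (1 : ℂ) - (((x ^ 2 / (1 + x ^ 2) : ℝ)) : ℂ) = (((1 / (1 + x ^ 2) : ℝ)) : ℂ) := by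
    have hr1 : 1 - x ^ 2 / (1 + x ^ 2) = 1 / (1 + x ^ 2) := by field_simp; ring
    rw [show (1:ℂ) - (((x ^ 2 / (1 + x ^ 2) : ℝ)) : ℂ) = (((1 - x ^ 2 / (1 + x ^ 2) : ℝ)) : ℂ)
      from by push_cast; ring, hr1]
  have h2 : (1 : ℂ) + (x:ℂ) ^ 2 = (((1 + x ^ 2 : ℝ)) : ℂ) := by push_cast; ring
  unfold hfun
  rw [h1, h2, cpow_real _ (by positivity : (0:ℝ) < x ^ 2 / (1 + x ^ 2)),
    cpow_real _ (by positivity : (0:ℝ) < 1 / (1 + x ^ 2)), cpow_real _ hr, cpow_real x hx,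
    Real.log_div (by positivity) hr.ne', Real.log_pow,
    Real.log_div one_ne_zero hr.ne', Real.log_one,
    abs_of_pos (by positivity), Complex.real_smul]
  have hxe : (x : ℂ) = Complex.exp ((Real.log x : ℝ) : ℂ) := by
    rw [← Complex.ofReal_exp, Real.exp_log hx]
  have hre : ((1 + x ^ 2 : ℝ) : ℂ) = Complex.exp ((Real.log (1 + x ^ 2) : ℝ) : ℂ) := by
    rw [← Complex.ofReal_exp, Real.exp_log hr]
  have hsc : ((2 * x / (1 + x ^ 2) ^ 2 : ℝ) : ℂ) =
      2 * Complex.exp (((Real.log x : ℝ) : ℂ) - 2 * ((Real.log (1 + x ^ 2) : ℝ) : ℂ)) := by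
    rw [Complex.exp_sub, ← hxe, show (2:ℂ) * ((Real.log (1 + x ^ 2) : ℝ) : ℂ) =
      ((Real.log (1 + x ^ 2) : ℝ) : ℂ) + ((Real.log (1 + x ^ 2) : ℝ) : ℂ) from by ring,
      Complex.exp_add, ← hre]
    push_cast
    ring
  rw [hsc]
  simp only [mul_assoc, ← Complex.exp_add, Complex.exp_sub]
  rw [div_mul_eq_mul_div, ← Complex.exp_add, ← Complex.exp_sub]
  congr 1
  push_cast
  ring

lemma Gamma_ne_zero_of_pos_re {z : ℂ} (hz : 0 < z.re) : Complex.Gamma z ≠ 0 := by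
  apply Complex.Gamma_ne_zero
  intro m hm
  rw [hm] at hz
  simp only [Complex.neg_re, Complex.natCast_re] at hz
  have : (0:ℝ) ≤ m := Nat.cast_nonneg m
  linarith

lemma key (s t : ℂ) (hs : 0 < s.re) (ht : 0 < t.re) :
    IntegrableOn (hfun s t) (Ioi 0) ∧
      ∫ x in Ioi 0, hfun s t x =
        Complex.Gamma (s / 2) * Complex.Gamma (t / 2) / (2 * Complex.Gamma ((s + t) / 2)) := by
  set g : ℝ → ℂ := fun y => (y : ℂ) ^ (s / 2 - 1) * (1 - (y : ℂ)) ^ (t / 2 - 1) with hg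
  have hs2 : 0 < (s / 2).re := by
    rw [Complex.div_re]
    simp
    positivity
  have ht2 : 0 < (t / 2).re := by
    rw [Complex.div_re]; simp; positivity
  have hbc : IntervalIntegrable g volume 0 1 := Complex.betaIntegral_convergent hs2 ht2
  have hIoo : IntegrableOn g (Ioo 0 1) :=
    ((intervalIntegrable_iff_integrableOn_Ioc_of_le zero_le_one).mp hbc).mono_set Ioo_subset_Ioc_self
  have hderiv : ∀ x ∈ Ioi (0:ℝ), HasDerivWithinAt (fun y : ℝ => y ^ 2 / (1 + y ^ 2))
      (2 * x / (1 + x ^ 2) ^ 2) (Ioi 0) x := fun x _ => (phi_hasDeriv x).hasDerivWithinAt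
  have himg : IntegrableOn g ((fun y : ℝ => y ^ 2 / (1 + y ^ 2)) '' (Ioi 0)) := by
    rw [phi_image]; exact hIoo
  have hint2 : IntegrableOn (fun x => |2 * x / (1 + x ^ 2) ^ 2| • g (x ^ 2 / (1 + x ^ 2))) (Ioi 0) :=
    (integrableOn_image_iff_integrableOn_abs_deriv_smul measurableSet_Ioi hderiv phi_injOn g).mp himg
  have heq : ∀ x ∈ Ioi (0:ℝ),
      |2 * x / (1 + x ^ 2) ^ 2| • g (x ^ 2 / (1 + x ^ 2)) = 2 * hfun s t x := by
    intro x hx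
    have := heq_point s t (show (0:ℝ) < x from hx)
    simpa [hg] using this
  have hint3 : IntegrableOn (fun x => 2 * hfun s t x) (Ioi 0) :=
    (integrableOn_congr_fun heq measurableSet_Ioi).mp hint2
  have hint : IntegrableOn (hfun s t) (Ioi 0) := by
    have := hint3.const_mul (2⁻¹ : ℂ)
    simp [← mul_assoc] at this; exact this
  refine ⟨hint, ?_⟩
  have hval : ∫ x in Ioo (0:ℝ) 1, g x = ∫ x in Ioi (0:ℝ), 2 * hfun s t x := by
    rw [← phi_image, integral_image_eq_integral_abs_deriv_smul measurableSet_Ioi hderiv phi_injOn g]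
    exact setIntegral_congr_fun measurableSet_Ioi heq
  have hbeta : Complex.betaIntegral (s / 2) (t / 2) = ∫ x in Ioo (0:ℝ) 1, g x := by
    rw [Complex.betaIntegral, intervalIntegral.integral_of_le zero_le_one,
      ← integral_Ioc_eq_integral_Ioo]
  have hGamma := Complex.Gamma_mul_Gamma_eq_betaIntegral hs2 ht2
  have hne : Complex.Gamma ((s + t) / 2) ≠ 0 := by
    apply Gamma_ne_zero_of_pos_re
    rw [Complex.div_re]; simp [Complex.add_re]; positivity
  have h2 : (s / 2) + (t / 2) = (s + t) / 2 := by ring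
  rw [h2] at hGamma
  rw [MeasureTheory.integral_const_mul] at hval
  rw [hbeta, hval] at hGamma
  rw [hGamma, mul_comm (Complex.Gamma ((s+t)/2)) (2 * ∫ x in Ioi (0:ℝ), hfun s t x),
    mul_div_assoc, div_mul_eq_div_div_swap, div_self hne, mul_comm]
  ring

noncomputable def ufun (x : ℝ) : ℂ := (1 + Complex.I * x) / (Real.sqrt (1 + x ^ 2) : ℂ)
noncomputable def vfun (x : ℝ) : ℂ := (1 - Complex.I * x) / (Real.sqrt (1 + x ^ 2) : ℂ)

lemma sqrtC_ne (x : ℝ) : ((Real.sqrt (1 + x ^ 2) : ℝ) : ℂ) ≠ 0 := by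
  have : (0:ℝ) < Real.sqrt (1 + x ^ 2) := Real.sqrt_pos.mpr (by positivity)
  exact_mod_cast this.ne'

lemma sqrt_sq' (x : ℝ) : ((Real.sqrt (1 + x ^ 2) : ℝ) : ℂ) * ((Real.sqrt (1 + x ^ 2) : ℝ) : ℂ)
    = ((1 + x ^ 2 : ℝ) : ℂ) := by
  rw [← Complex.ofReal_mul, Real.mul_self_sqrt (by positivity)]

lemma uv_mul (x : ℝ) : ufun x * vfun x = 1 := by
  unfold ufun vfun
  rw [div_mul_div_comm, div_eq_one_iff_eq (by simpa using mul_ne_zero (sqrtC_ne x) (sqrtC_ne x)),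
    sqrt_sq']
  push_cast
  linear_combination (-(x:ℂ) ^ 2) * Complex.I_sq

lemma u_ne (x : ℝ) : ufun x ≠ 0 := left_ne_zero_of_mul_eq_one (uv_mul x)
lemma v_ne (x : ℝ) : vfun x ≠ 0 := right_ne_zero_of_mul_eq_one (uv_mul x)
lemma v_eq_inv (x : ℝ) : vfun x = (ufun x)⁻¹ :=
  eq_inv_of_mul_eq_one_left (by rw [mul_comm]; exact uv_mul x)

noncomputable def brB (ε : ℂ) (m : ℕ) (x : ℝ) : ℂ := (ufun x ^ m)⁻¹ + ε * (vfun x ^ m)⁻¹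

lemma genBeta_eq (ε : ℂ) (m : ℕ) (a b : ℂ) :
    genBeta ε m a b = ∫ x in Ioi (0:ℝ), hfun a b x * brB ε m x := by
  unfold genBeta hfun brB ufun vfun
  congr 1
  funext x
  rw [Complex.cpow_neg, Complex.cpow_neg, Complex.cpow_natCast, Complex.cpow_natCast]

lemma u_abs (x : ℝ) : ‖ufun x‖ = 1 := by
  unfold ufun
  rw [norm_div, Complex.norm_real, Real.norm_eq_abs, abs_of_pos (Real.sqrt_pos.mpr (by positivity))]
  rw [div_eq_one_iff_eq (Real.sqrt_pos.mpr (by positivity : (0:ℝ) < 1 + x ^ 2)).ne']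
  rw [Complex.norm_def]
  congr 1
  simp [Complex.normSq_apply]
  ring

lemma v_abs (x : ℝ) : ‖vfun x‖ = 1 := by
  unfold vfun
  rw [norm_div, Complex.norm_real, Real.norm_eq_abs, abs_of_pos (Real.sqrt_pos.mpr (by positivity))]
  rw [div_eq_one_iff_eq (Real.sqrt_pos.mpr (by positivity : (0:ℝ) < 1 + x ^ 2)).ne']
  rw [Complex.norm_def]
  congr 1
  simp [Complex.normSq_apply]
  ring

lemma brB_bound (ε : ℂ) (m : ℕ) (x : ℝ) : ‖brB ε m x‖ ≤ 1 + ‖ε‖ := by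
  unfold brB
  refine (norm_add_le _ _).trans ?_
  have h1 : ‖(ufun x ^ m)⁻¹‖ = 1 := by
    rw [norm_inv, norm_pow]
    simp [u_abs]
  have h2 : ‖(vfun x ^ m)⁻¹‖ = 1 := by
    rw [norm_inv, norm_pow]
    simp [v_abs]
  rw [h1, norm_mul, h2, mul_one]

lemma u_cont : Continuous ufun := by
  apply Continuous.div
  · fun_prop
  · fun_prop
  · exact fun x => sqrtC_ne x

lemma v_cont : Continuous vfun := by
  apply Continuous.div
  · fun_prop
  · fun_prop
  · exact fun x => sqrtC_ne x

lemma brB_cont (ε : ℂ) (m : ℕ) : Continuous (brB ε m) := by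
  unfold brB
  apply Continuous.add
  · exact (u_cont.pow m).inv₀ fun x => pow_ne_zero _ (u_ne x)
  · exact continuous_const.mul ((v_cont.pow m).inv₀ fun x => pow_ne_zero _ (v_ne x))

lemma main_integrable (ε : ℂ) (m : ℕ) (a b : ℂ) (ha : 0 < a.re) (hb : 0 < b.re) :
    IntegrableOn (fun x => hfun a b x * brB ε m x) (Ioi 0) := by
  have := Integrable.bdd_mul ((key a b ha hb).1)
    ((brB_cont ε m).aestronglyMeasurable.restrict) (ae_of_all _ fun x => brB_bound ε m x)
  rw [IntegrableOn]
  simpa [mul_comm] using this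

lemma sqrt_exp (x : ℝ) : ((Real.sqrt (1 + x ^ 2) : ℝ) : ℂ) =
    Complex.exp (((Real.log (1 + x ^ 2) : ℝ) : ℂ) * (1 / 2)) := by
  have hr : (0:ℝ) < 1 + x ^ 2 := by positivity
  rw [Real.sqrt_eq_rpow, show ((1 + x ^ 2 : ℝ) ^ ((1:ℝ)/2) : ℝ) = ((1 + x ^ 2 : ℝ)) ^ (((1:ℝ)/2:ℝ)) from rfl,
    ← Real.exp_log (x := (1 + x ^ 2 : ℝ) ^ ((1:ℝ)/2)) (Real.rpow_pos_of_pos hr _),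
    Real.log_rpow hr, Complex.ofReal_exp]
  push_cast
  ring_nf

lemma hfun_shift (a b : ℂ) (x : ℝ) :
    hfun a b x * (((Real.sqrt (1 + x ^ 2) : ℝ) : ℂ))⁻¹ = hfun a (b + 1) x := by
  have hr : (0:ℝ) < 1 + x ^ 2 := by positivity
  unfold hfun
  have h2 : (1:ℂ) + (x:ℂ) ^ 2 = ((1 + x ^ 2 : ℝ) : ℂ) := by push_cast; ring
  rw [h2, cpow_real _ hr, cpow_real _ hr, sqrt_exp, ← Complex.exp_neg, mul_assoc,
    ← Complex.exp_add]
  congr 2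
  ring

lemma brB_rec (ε : ℂ) (m : ℕ) (x : ℝ) :
    brB ε (m + 2) x =
      2 * (((Real.sqrt (1 + x ^ 2) : ℝ) : ℂ))⁻¹ * brB ε (m + 1) x - brB ε m x := by
  have hu := u_ne x
  have hadd : ufun x + vfun x = 2 * (((Real.sqrt (1 + x ^ 2) : ℝ) : ℂ))⁻¹ := by
    unfold ufun vfun
    rw [← add_div]
    rw [show (1 + Complex.I * x) + (1 - Complex.I * x) = 2 from by ring]
    rw [div_eq_mul_inv]
  rw [← hadd]
  unfold brB
  rw [v_eq_inv, inv_pow, inv_pow, inv_pow, inv_inv, inv_inv, inv_inv]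
  field_simp
  ring

lemma re_add_one {b : ℂ} (hb : 0 < b.re) : 0 < (b + 1).re := by
  simp [Complex.add_re]
  linarith

lemma genBeta_rec (ε : ℂ) (m : ℕ) (a b : ℂ) (ha : 0 < a.re) (hb : 0 < b.re) :
    genBeta ε (m + 2) a b = 2 * genBeta ε (m + 1) a (b + 1) - genBeta ε m a b := by
  rw [genBeta_eq, genBeta_eq, genBeta_eq]
  have h1 : IntegrableOn (fun x => hfun a (b + 1) x * brB ε (m + 1) x) (Ioi 0) :=
    main_integrable ε (m + 1) a (b + 1) ha (re_add_one hb)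
  have h2 : IntegrableOn (fun x => hfun a b x * brB ε m x) (Ioi 0) :=
    main_integrable ε m a b ha hb
  have hpt : ∀ x : ℝ, hfun a b x * brB ε (m + 2) x =
      2 * (hfun a (b + 1) x * brB ε (m + 1) x) - hfun a b x * brB ε m x := by
    intro x
    rw [brB_rec, mul_sub, show hfun a b x * (2 * (((Real.sqrt (1 + x ^ 2) : ℝ) : ℂ))⁻¹ *
      brB ε (m + 1) x) = 2 * ((hfun a b x * (((Real.sqrt (1 + x ^ 2) : ℝ) : ℂ))⁻¹) *
      brB ε (m + 1) x) from by ring, hfun_shift]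
  simp_rw [hpt]
  rw [MeasureTheory.integral_sub (h1.const_mul 2) h2, MeasureTheory.integral_const_mul]

lemma genBeta_zero (ε : ℂ) (a b : ℂ) (ha : 0 < a.re) (hb : 0 < b.re) :
    genBeta ε 0 a b =
      (1 + ε) * (Complex.Gamma (a / 2) * Complex.Gamma (b / 2) /
        (2 * Complex.Gamma ((a + b) / 2))) := by
  rw [genBeta_eq]
  have hpt : ∀ x : ℝ, hfun a b x * brB ε 0 x = (1 + ε) * hfun a b x := by
    intro x
    unfold brB
    simp
    ring
  simp_rw [hpt]
  rw [MeasureTheory.integral_const_mul, (key a b ha hb).2]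

lemma genBeta_one_pos (a b : ℂ) (ha : 0 < a.re) (hb : 0 < b.re) :
    genBeta 1 1 a b =
      Complex.Gamma (a / 2) * Complex.Gamma ((1 + b) / 2) /
        Complex.Gamma ((1 + a + b) / 2) := by
  rw [genBeta_eq]
  have hpt : ∀ x : ℝ, hfun a b x * brB 1 1 x = 2 * hfun a (b + 1) x := by
    intro x
    unfold brB
    rw [v_eq_inv, pow_one, pow_one, inv_inv, one_mul]
    have hadd : (ufun x)⁻¹ + ufun x = 2 * (((Real.sqrt (1 + x ^ 2) : ℝ) : ℂ))⁻¹ := by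
      rw [← v_eq_inv]
      rw [add_comm]
      unfold ufun vfun
      rw [← add_div, show (1 + Complex.I * x) + (1 - Complex.I * x) = 2 from by ring,
        div_eq_mul_inv]
    rw [hadd, show hfun a b x * (2 * (((Real.sqrt (1 + x ^ 2) : ℝ) : ℂ))⁻¹) =
      2 * (hfun a b x * (((Real.sqrt (1 + x ^ 2) : ℝ) : ℂ))⁻¹) from by ring, hfun_shift]
  simp_rw [hpt]
  rw [MeasureTheory.integral_const_mul, (key a (b + 1) ha (re_add_one hb)).2]
  rw [show a + (b + 1) = 1 + a + b from by ring, show (1 + b) / 2 = (b + 1) / 2 from by ring]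
  have hG : Complex.Gamma ((1 + a + b) / 2) ≠ 0 := by
    apply Gamma_ne_zero_of_pos_re
    rw [Complex.div_re]
    simp [Complex.add_re]
    positivity
  field_simp

lemma Gamma_pos_ne {z : ℂ} (hz : 0 < z.re) : Complex.Gamma z ≠ 0 := Gamma_ne_zero_of_pos_re hz

lemma re_half_pos {z : ℂ} (hz : 0 < z.re) : 0 < (z / 2).re := by
  rw [Complex.div_re]
  simp
  positivity

lemma genBeta_one_neg (a b : ℂ) (ha : 0 < a.re) (hb : 0 < b.re) :
    genBeta (-1) 1 a b =
      -Complex.I * (Complex.Gamma ((1 + a) / 2) * Complex.Gamma (b / 2) /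
        Complex.Gamma ((1 + a + b) / 2)) := by
  rw [genBeta_eq]
  have hpt : ∀ x ∈ Ioi (0:ℝ), hfun a b x * brB (-1) 1 x = (-2 * Complex.I) * hfun (a + 1) b x := by
    intro x hx
    have hx' : (0:ℝ) < x := hx
    unfold brB
    rw [pow_one, pow_one, v_eq_inv, inv_inv, ← v_eq_inv]
    have hbr : vfun x + (-1 : ℂ) * ufun x = (-2 * Complex.I) * ((x : ℂ) *
        (((Real.sqrt (1 + x ^ 2) : ℝ) : ℂ))⁻¹) := by
      unfold ufun vfun
      rw [div_eq_mul_inv, div_eq_mul_inv]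
      ring
    rw [hbr]
    have hxh : (x : ℂ) * hfun a (b + 1) x = hfun (a + 1) b x := by
      unfold hfun
      rw [show (a + 1) - 1 = (a - 1) + 1 from by ring,
        Complex.cpow_add _ _ (Complex.ofReal_ne_zero.mpr hx'.ne'), Complex.cpow_one,
        show -((a + 1) + b) / 2 = -(a + (b + 1)) / 2 from by ring]
      ring
    calc hfun a b x * (-2 * Complex.I * ((x : ℂ) * (((Real.sqrt (1 + x ^ 2) : ℝ) : ℂ))⁻¹))
        = (-2 * Complex.I) * ((x : ℂ) * (hfun a b x * (((Real.sqrt (1 + x ^ 2) : ℝ) : ℂ))⁻¹)) := by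
          ring
      _ = (-2 * Complex.I) * ((x : ℂ) * hfun a (b + 1) x) := by rw [hfun_shift]
      _ = (-2 * Complex.I) * hfun (a + 1) b x := by rw [hxh]
  rw [setIntegral_congr_fun measurableSet_Ioi hpt, MeasureTheory.integral_const_mul,
    (key (a + 1) b (by rw [Complex.add_re]; simp; linarith) hb).2]
  have hG : Complex.Gamma ((a + 1 + b) / 2) ≠ 0 := by
    apply Gamma_ne_zero_of_pos_re
    rw [Complex.div_re]
    simp [Complex.add_re]
    positivity
  rw [show (1 + a) / 2 = (a + 1) / 2 from by ring, show 1 + a + b = a + 1 + b from by ring]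
  field_simp

open MvPolynomial in
noncomputable def shiftP (P : MvPolynomial (Fin 2) ℂ) : MvPolynomial (Fin 2) ℂ :=
  bind₁ ![X 0, X 1 + C 1] P

lemma eval_shiftP (P : MvPolynomial (Fin 2) ℂ) (a b : ℂ) :
    MvPolynomial.eval ![a, b] (shiftP P) = MvPolynomial.eval ![a, b + 1] P := by
  unfold shiftP
  rw [show (MvPolynomial.eval ![a, b]) = MvPolynomial.eval₂Hom (RingHom.id ℂ) ![a, b] from rfl,
    MvPolynomial.eval₂Hom_bind₁]
  rw [show (MvPolynomial.eval ![a, b + 1]) = MvPolynomial.eval₂Hom (RingHom.id ℂ) ![a, b + 1]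
    from rfl]
  refine MvPolynomial.eval₂Hom_congr rfl (funext fun i => ?_) rfl
  fin_cases i <;> simp

lemma ne_zero_of_re_pos {z : ℂ} (hz : 0 < z.re) : z ≠ 0 := by
  intro h
  rw [h] at hz
  simp at hz

lemma re_nat_add_div2 (k : ℕ) (b : ℂ) (hb : 0 < b.re) : 0 < (((k : ℂ) + b) / 2).re := by
  rw [Complex.div_re]
  simp [Complex.add_re]
  positivity

lemma re_nat_add_add_div2 (k : ℕ) (a b : ℂ) (ha : 0 < a.re) (hb : 0 < b.re) :
    0 < (((k : ℂ) + a + b) / 2).re := by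
  rw [Complex.div_re]
  simp [Complex.add_re]
  positivity

set_option maxHeartbeats 1000000 in
lemma lemP : ∀ m : ℕ, ∃ P : MvPolynomial (Fin 2) ℂ, ∀ a b : ℂ, 0 < a.re → 0 < b.re →
    genBeta 1 m a b = MvPolynomial.eval ![a, b] P *
      (Complex.Gamma (a / 2) * Complex.Gamma ((((m % 2 : ℕ) : ℂ) + b) / 2) /
        Complex.Gamma ((((m : ℕ) : ℂ) + a + b) / 2)) := by
  intro m
  induction m using Nat.twoStepInduction with
  | zero =>
    refine ⟨1, fun a b ha hb => ?_⟩
    rw [genBeta_zero 1 a b ha hb]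
    have hD : Complex.Gamma ((a + b) / 2) ≠ 0 :=
      Gamma_pos_ne (by rw [Complex.div_re]; simp [Complex.add_re]; positivity)
    simp only [Nat.zero_mod, Nat.cast_zero, zero_add, map_one, one_mul]
    field_simp
    ring
  | one =>
    refine ⟨1, fun a b ha hb => ?_⟩
    rw [genBeta_one_pos a b ha hb]
    norm_num
  | more m IH0 IH1 =>
    obtain ⟨P0, h0⟩ := IH0
    obtain ⟨P1, h1⟩ := IH1
    have e2 : ∀ a b : ℂ, (((m + 1 : ℕ) : ℂ) + a + (b + 1)) / 2 =
        (((m + 2 : ℕ) : ℂ) + a + b) / 2 := by intro a b; push_cast; ring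
    have e3 : ∀ a b : ℂ, (((m + 2 : ℕ) : ℂ) + a + b) / 2 = (((m : ℕ) : ℂ) + a + b) / 2 + 1 := by
      intro a b; push_cast; ring
    have hmod : (m + 2) % 2 = m % 2 := by omega
    rcases Nat.mod_two_eq_zero_or_one m with hm0 | hm1
    · -- δ = 0 : extra Pochhammer factor b/2
      have hm1' : (m + 1) % 2 = 1 := by omega
      refine ⟨MvPolynomial.C 2 * shiftP P1 * (MvPolynomial.C (1/2 : ℂ) * MvPolynomial.X 1) -
        P0 * (MvPolynomial.C (1/2 : ℂ) *
          (MvPolynomial.C (m : ℂ) + MvPolynomial.X 0 + MvPolynomial.X 1)), fun a b ha hb => ?_⟩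
      rw [genBeta_rec 1 m a b ha hb, h1 a (b + 1) ha (re_add_one hb), h0 a b ha hb]
      have hz : (((0 : ℕ) : ℂ) + b) / 2 ≠ 0 :=
        _root_.ne_zero_of_re_pos (re_nat_add_div2 _ b hb)
      have e1 : ((((m + 1) % 2 : ℕ) : ℂ) + (b + 1)) / 2 = (((0 : ℕ) : ℂ) + b) / 2 + 1 := by
        rw [hm1']; push_cast; ring
      have hw0 : (((m : ℕ) : ℂ) + a + b) / 2 ≠ 0 :=
        _root_.ne_zero_of_re_pos (re_nat_add_add_div2 m a b ha hb)
      have hD0 : Complex.Gamma ((((m : ℕ) : ℂ) + a + b) / 2) ≠ 0 :=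
        Gamma_pos_ne (re_nat_add_add_div2 m a b ha hb)
      rw [e1, Complex.Gamma_add_one _ hz, e2, e3, Complex.Gamma_add_one _ hw0, hmod, hm0]
      simp only [Nat.cast_zero, zero_add, MvPolynomial.eval_sub, MvPolynomial.eval_mul,
        MvPolynomial.eval_add, MvPolynomial.eval_C, MvPolynomial.eval_X, eval_shiftP,
        Matrix.cons_val_zero, Matrix.cons_val_one, Matrix.head_cons]
      set w := (((m : ℕ) : ℂ) + a + b) / 2 with hw
      set Ga := Complex.Gamma (a / 2) with hGa
      set Gb := Complex.Gamma (b / 2) with hGb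
      set G0 := Complex.Gamma w with hG0
      field_simp
      ring
    · -- δ = 1 : no extra factor
      have hm1' : (m + 1) % 2 = 0 := by omega
      refine ⟨MvPolynomial.C 2 * shiftP P1 -
        P0 * (MvPolynomial.C (1/2 : ℂ) *
          (MvPolynomial.C (m : ℂ) + MvPolynomial.X 0 + MvPolynomial.X 1)), fun a b ha hb => ?_⟩
      rw [genBeta_rec 1 m a b ha hb, h1 a (b + 1) ha (re_add_one hb), h0 a b ha hb]
      have e1 : ((((m + 1) % 2 : ℕ) : ℂ) + (b + 1)) / 2 = (((1 : ℕ) : ℂ) + b) / 2 := by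
        rw [hm1']; push_cast; ring
      have hw0 : (((m : ℕ) : ℂ) + a + b) / 2 ≠ 0 :=
        _root_.ne_zero_of_re_pos (re_nat_add_add_div2 m a b ha hb)
      have hD0 : Complex.Gamma ((((m : ℕ) : ℂ) + a + b) / 2) ≠ 0 :=
        Gamma_pos_ne (re_nat_add_add_div2 m a b ha hb)
      rw [e1, e2, e3, Complex.Gamma_add_one _ hw0, hmod, hm1]
      simp only [Nat.cast_one, MvPolynomial.eval_sub, MvPolynomial.eval_mul,
        MvPolynomial.eval_add, MvPolynomial.eval_C, MvPolynomial.eval_X, eval_shiftP,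
        Matrix.cons_val_zero, Matrix.cons_val_one, Matrix.head_cons]
      set w := (((m : ℕ) : ℂ) + a + b) / 2 with hw
      set Ga := Complex.Gamma (a / 2) with hGa
      set Gb := Complex.Gamma ((1 + b) / 2) with hGb
      set G0 := Complex.Gamma w with hG0
      field_simp
      ring

set_option maxHeartbeats 1000000 in
lemma lemM : ∀ m : ℕ, ∃ P : MvPolynomial (Fin 2) ℂ, ∀ a b : ℂ, 0 < a.re → 0 < b.re →
    genBeta (-1) m a b = MvPolynomial.eval ![a, b] P *
      (Complex.Gamma ((1 + a) / 2) * Complex.Gamma ((1 - ((m % 2 : ℕ) : ℂ) + b) / 2) /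
        Complex.Gamma ((((m : ℕ) : ℂ) + a + b) / 2)) := by
  intro m
  induction m using Nat.twoStepInduction with
  | zero =>
    refine ⟨0, fun a b ha hb => ?_⟩
    rw [genBeta_zero (-1) a b ha hb]
    simp
  | one =>
    refine ⟨MvPolynomial.C (-Complex.I), fun a b ha hb => ?_⟩
    rw [genBeta_one_neg a b ha hb]
    simp only [Nat.cast_one, MvPolynomial.eval_C]
    rw [show (1 - (((1 % 2 : ℕ)) : ℂ) + b) / 2 = b / 2 from by push_cast; ring]
  | more m IH0 IH1 =>
    obtain ⟨P0, h0⟩ := IH0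
    obtain ⟨P1, h1⟩ := IH1
    have e2 : ∀ a b : ℂ, (((m + 1 : ℕ) : ℂ) + a + (b + 1)) / 2 =
        (((m + 2 : ℕ) : ℂ) + a + b) / 2 := by intro a b; push_cast; ring
    have e3 : ∀ a b : ℂ, (((m + 2 : ℕ) : ℂ) + a + b) / 2 = (((m : ℕ) : ℂ) + a + b) / 2 + 1 := by
      intro a b; push_cast; ring
    have hmod : (m + 2) % 2 = m % 2 := by omega
    rcases Nat.mod_two_eq_zero_or_one m with hm0 | hm1
    · -- δ = 0 : no shift in the numerator Gamma
      have hm1' : (m + 1) % 2 = 1 := by omega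
      refine ⟨MvPolynomial.C 2 * shiftP P1 -
        P0 * (MvPolynomial.C (1/2 : ℂ) *
          (MvPolynomial.C (m : ℂ) + MvPolynomial.X 0 + MvPolynomial.X 1)), fun a b ha hb => ?_⟩
      rw [genBeta_rec (-1) m a b ha hb, h1 a (b + 1) ha (re_add_one hb), h0 a b ha hb]
      have e1 : (1 - (((m + 1) % 2 : ℕ) : ℂ) + (b + 1)) / 2 = (1 + b) / 2 := by
        rw [hm1']; push_cast; ring
      have hw0 : (((m : ℕ) : ℂ) + a + b) / 2 ≠ 0 :=
        _root_.ne_zero_of_re_pos (re_nat_add_add_div2 m a b ha hb)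
      have hD0 : Complex.Gamma ((((m : ℕ) : ℂ) + a + b) / 2) ≠ 0 :=
        Gamma_pos_ne (re_nat_add_add_div2 m a b ha hb)
      rw [e1, e2, e3, Complex.Gamma_add_one _ hw0, hmod, hm0]
      simp only [Nat.cast_zero, sub_zero, MvPolynomial.eval_sub, MvPolynomial.eval_mul,
        MvPolynomial.eval_add, MvPolynomial.eval_C, MvPolynomial.eval_X, eval_shiftP,
        Matrix.cons_val_zero, Matrix.cons_val_one, Matrix.head_cons]
      set w := (((m : ℕ) : ℂ) + a + b) / 2 with hw
      set Ga := Complex.Gamma ((1 + a) / 2) with hGa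
      set Gb := Complex.Gamma ((1 + b) / 2) with hGb
      set G0 := Complex.Gamma w with hG0
      field_simp
      ring
    · -- δ = 1 : shift, Pochhammer factor b/2
      have hm1' : (m + 1) % 2 = 0 := by omega
      refine ⟨MvPolynomial.C 2 * shiftP P1 * (MvPolynomial.C (1/2 : ℂ) * MvPolynomial.X 1) -
        P0 * (MvPolynomial.C (1/2 : ℂ) *
          (MvPolynomial.C (m : ℂ) + MvPolynomial.X 0 + MvPolynomial.X 1)), fun a b ha hb => ?_⟩
      rw [genBeta_rec (-1) m a b ha hb, h1 a (b + 1) ha (re_add_one hb), h0 a b ha hb]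
      have hz : (b : ℂ) / 2 ≠ 0 := _root_.ne_zero_of_re_pos (re_half_pos hb)
      have e1 : (1 - (((m + 1) % 2 : ℕ) : ℂ) + (b + 1)) / 2 = b / 2 + 1 := by
        rw [hm1']; push_cast; ring
      have hw0 : (((m : ℕ) : ℂ) + a + b) / 2 ≠ 0 :=
        _root_.ne_zero_of_re_pos (re_nat_add_add_div2 m a b ha hb)
      have hD0 : Complex.Gamma ((((m : ℕ) : ℂ) + a + b) / 2) ≠ 0 :=
        Gamma_pos_ne (re_nat_add_add_div2 m a b ha hb)
      rw [e1, Complex.Gamma_add_one _ hz, e2, e3, Complex.Gamma_add_one _ hw0, hmod, hm1]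
      simp only [Nat.cast_one, MvPolynomial.eval_sub, MvPolynomial.eval_mul,
        MvPolynomial.eval_add, MvPolynomial.eval_C, MvPolynomial.eval_X, eval_shiftP,
        Matrix.cons_val_zero, Matrix.cons_val_one, Matrix.head_cons]
      rw [show ((1 : ℂ) - 1 + b) / 2 = b / 2 from by ring]
      set w := (((m : ℕ) : ℂ) + a + b) / 2 with hw
      set Ga := Complex.Gamma ((1 + a) / 2) with hGa
      set Gb := Complex.Gamma (b / 2) with hGb
      set G0 := Complex.Gamma w with hG0
      field_simp
      ring


/-- Factorization of `𝓑_{±1,m}(a,b)` as a two-variable polynomial times an explicit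
quotient of Gamma functions, where `δ ∈ {0,1}` has the parity of `m`. -/
theorem stmt_5 (m : ℕ) (δ : ℕ) (hδ : δ = 0 ∨ δ = 1) (hm : m % 2 = δ % 2) :
    ∃ Pp Pm : MvPolynomial (Fin 2) ℂ, ∀ a b : ℂ, 0 < a.re → 0 < b.re →
      genBeta 1 m a b =
        MvPolynomial.eval ![a, b] Pp *
          (Complex.Gamma (a / 2) * Complex.Gamma (((δ : ℂ) + b) / 2) /
            Complex.Gamma (((m : ℂ) + a + b) / 2)) ∧
      genBeta (-1) m a b =
        MvPolynomial.eval ![a, b] Pm *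
          (Complex.Gamma ((1 + a) / 2) * Complex.Gamma ((1 - (δ : ℂ) + b) / 2) /
            Complex.Gamma (((m : ℂ) + a + b) / 2)) := by
  obtain ⟨Pp, hp⟩ := lemP m
  obtain ⟨Pm, hm'⟩ := lemM m
  have hδ2 : m % 2 = δ := by rcases hδ with h | h <;> omega
  refine ⟨Pp, Pm, fun a b ha hb => ⟨?_, ?_⟩⟩
  · rw [hp a b ha hb, hδ2]
  · rw [hm' a b ha hb, hδ2]
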